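/- One-step recursion for the sl_2 generating function: with notation as above and the x_i solving x_{i+1}x_{i-1} = x_i^2 - 1, one has Z^{(k)}_{ℓ,(n_1,…,n_k)}(x_0,x_1) = (x_1^{n_1+2}/(x_0 x_2)) · Z^{(k-1)}_{ℓ,(n_2,…,n_k)}(x_1,x_2). -/

import Mathlib

open Finset

/-- Generalized binomial coefficient `C(m+q, m) = (q+1)(q+2)⋯(q+m)/m!`, defined for any
integer `q` (possibly negative) and `m ∈ ℕ`. -/
noncomputable def genBinom (q : ℤ) (m : ℕ) : ℝ :=
  (∏ j ∈ Finset.range m, ((q : ℝ) + (j : ℝ) + 1)) / (m.factorial : ℝ)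

/-- `q_i(m) = ℓ + ∑_{j=i+1}^k (j-i)(2 m_j - n_j)`, where the `j`-th variable (j = 1,…,k)
is indexed by `Fin k` via `j = (j' : Fin k) + 1`. -/
def qvac (k ℓ : ℕ) (n : ℕ → ℕ) (m : Fin k → ℕ) (i : ℕ) : ℤ :=
  (ℓ : ℤ) + ∑ j : Fin k,
    (if i ≤ (j : ℕ) then (((j : ℕ) : ℤ) + 1 - (i : ℤ)) * (2 * (m j : ℤ) - (n ((j : ℕ) + 1) : ℤ))
     else 0)

/-- The summand of the sl₂ generating function `Z^{(k)}_{ℓ,n}(x₀,x₁)`. -/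
noncomputable def Zsummand (x0 x1 : ℝ) (k ℓ : ℕ) (n : ℕ → ℕ) (m : Fin k → ℕ) : ℝ :=
  x1 ^ (-(qvac k ℓ n m 0)) * x0 ^ (qvac k ℓ n m 1) *
    ∏ j : Fin k, genBinom (qvac k ℓ n m ((j : ℕ) + 1)) (m j)

/-- The sl₂ generating function `Z^{(k)}_{ℓ,n}(x₀,x₁)
  = ∑_{m ∈ ℤ_{≥0}^k} x₁^{-q₀(m)} x₀^{q₁(m)} ∏_{i=1}^k C(m_i + q_i(m), m_i)`. -/
noncomputable def Zfun (x0 x1 : ℝ) (k ℓ : ℕ) (n : ℕ → ℕ) : ℝ :=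
  ∑' m : Fin k → ℕ, Zsummand x0 x1 k ℓ n m

/-! ### Auxiliary lemmas about `genBinom` -/

lemma prod_descF (a m : ℕ) : ∏ j ∈ range m, ((a:ℝ) + j + 1) = ((a + m).descFactorial m : ℝ) := by
  induction m with
  | zero => simp
  | succ m ih =>
    rw [prod_range_succ, ih, show a + (m+1) = (a + m) + 1 from rfl, Nat.succ_descFactorial_succ]
    push_cast; ring

lemma genBinom_natCast (a m : ℕ) : genBinom a m = ((m + a).choose a : ℝ) := by
  have h1 := prod_descF a m
  have h2 : (a + m).choose m = (m + a).choose a := by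
    rw [Nat.add_comm a m]; exact Nat.choose_symm_add
  rw [genBinom]
  push_cast at h1 ⊢
  rw [h1, Nat.descFactorial_eq_factorial_mul_choose, h2]
  have hm : (m.factorial : ℝ) ≠ 0 := Nat.cast_ne_zero.2 m.factorial_ne_zero
  field_simp
  exact Nat.cast_mul _ _

lemma prod_sub_cast (r m : ℕ) : ∏ j ∈ range m, ((j:ℝ) - r) = (-1)^m * (r.descFactorial m : ℝ) := by
  induction m with
  | zero => simp
  | succ m ih =>
    rw [prod_range_succ, ih, Nat.descFactorial_succ]
    rcases le_or_gt m r with h | h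
    · rw [Nat.cast_mul, Nat.cast_sub h]
      ring
    · have h0 : r.descFactorial m = 0 := Nat.descFactorial_eq_zero_iff_lt.2 h
      simp [h0]

lemma genBinom_negSucc (r m : ℕ) : genBinom (-((r:ℤ)+1)) m = (-1)^m * (r.choose m : ℝ) := by
  rw [genBinom]
  rw [Finset.prod_congr rfl (g := fun j : ℕ => ((j:ℝ) - r)) (fun j _ => by push_cast; ring)]
  rw [prod_sub_cast, Nat.descFactorial_eq_factorial_mul_choose]
  have : (m.factorial : ℝ) ≠ 0 := Nat.cast_ne_zero.2 m.factorial_ne_zero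
  push_cast
  field_simp

lemma hasSum_genBinom_nat (a : ℕ) {t : ℝ} (ht : |t| < 1) :
    HasSum (fun m => genBinom a m * t ^ m) ((1 - t) ^ (-((a:ℤ) + 1))) := by
  have h1t : (0:ℝ) < 1 - t := by have := (abs_lt.1 ht).2; linarith
  have h := hasSum_choose_mul_geometric_of_norm_lt_one a (r := t) (by rwa [Real.norm_eq_abs])
  have he : ((1:ℝ) - t) ^ (-((a:ℤ) + 1)) = 1 / (1 - t) ^ (a + 1) := by
    rw [show -((a:ℤ)+1) = -((a+1 : ℕ) : ℤ) by push_cast; ring, zpow_neg, zpow_natCast, one_div]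
  rw [he]
  convert h using 2 with m
  · rfl
  rw [genBinom_natCast]

lemma hasSum_genBinom_negSucc (r : ℕ) (t : ℝ) :
    HasSum (fun m => genBinom (-((r:ℤ)+1)) m * t ^ m) ((1 - t) ^ (-(-((r:ℤ)+1) + 1))) := by
  have hval : -(-((r:ℤ)+1) + 1) = (r:ℤ) := by ring
  rw [hval, zpow_natCast]
  have hs := hasSum_sum_of_ne_finset_zero
    (f := fun m => genBinom (-((r:ℤ)+1)) m * t ^ m) (s := range (r+1)) (L := SummationFilter.unconditional ℕ)
    (fun m hm => by
      simp only [genBinom_negSucc, Nat.choose_eq_zero_of_lt (show r < m by simpa using hm)]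
      simp)
  convert hs using 1
  rw [show (1:ℝ) - t = -t + 1 by ring, add_pow]
  refine Finset.sum_congr rfl fun m hm => ?_
  simp only [genBinom_negSucc]
  ring

/-- The generalized binomial series: for any integer exponent `q` and `|t| < 1`,
`∑ₘ C(m+q, m) tᵐ = (1-t)^{-(q+1)}`. -/
lemma hasSum_genBinom (q : ℤ) {t : ℝ} (ht : |t| < 1) :
    HasSum (fun m => genBinom q m * t ^ m) ((1 - t) ^ (-(q + 1))) := by
  obtain ⟨a, rfl | rfl⟩ := Int.eq_nat_or_neg q
  · exact hasSum_genBinom_nat a ht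
  · rcases a with _ | r
    · simpa using hasSum_genBinom_nat 0 ht
    · have : -((r+1 : ℕ) : ℤ) = -((r:ℤ)+1) := by push_cast; ring
      rw [this]
      exact hasSum_genBinom_negSucc r t

lemma one_le_genBinom_of_nonneg {q : ℤ} (hq : 0 ≤ q) (m : ℕ) : 1 ≤ genBinom q m := by
  lift q to ℕ using hq
  rw [genBinom_natCast]
  exact_mod_cast Nat.succ_le_of_lt (Nat.choose_pos (Nat.le_add_left q m))

/-! ### Structural lemmas about `qvac` and `Zsummand` -/

lemma qvac_step (K ℓ : ℕ) (n : ℕ → ℕ) (m : Fin K → ℕ) :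
    qvac K ℓ n m 0 = qvac K ℓ n m 1 + ∑ j : Fin K, (2 * (m j : ℤ) - (n ((j:ℕ) + 1) : ℤ)) := by
  unfold qvac
  rw [add_assoc, ← Finset.sum_add_distrib]
  congr 1
  refine Finset.sum_congr rfl fun j _ => ?_
  rcases Nat.eq_zero_or_pos (j : ℕ) with h | h
  · simp [h]
  · rw [if_pos (Nat.zero_le _), if_pos (show 1 ≤ (j:ℕ) from h)]
    push_cast
    ring

lemma qvac_cons_succ (K ℓ : ℕ) (n : ℕ → ℕ) (m1 : ℕ) (m' : Fin K → ℕ) (i : ℕ) :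
    qvac (K+1) ℓ n (Fin.cons m1 m') (i+1) = qvac K ℓ (fun j => n (j+1)) m' i := by
  unfold qvac
  rw [Fin.sum_univ_succ]
  simp only [Fin.cons_zero, Fin.cons_succ, Fin.val_zero, Fin.val_succ]
  rw [if_neg (by omega), zero_add]
  congr 1
  refine Finset.sum_congr rfl fun j _ => ?_
  by_cases h : i ≤ (j : ℕ)
  · rw [if_pos (by omega), if_pos h]
    push_cast
    ring
  · rw [if_neg (by omega), if_neg h]

lemma qvac_cons_zero (K ℓ : ℕ) (n : ℕ → ℕ) (m1 : ℕ) (m' : Fin K → ℕ) :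
    qvac (K+1) ℓ n (Fin.cons m1 m') 0
      = 2*(m1:ℤ) - (n 1 : ℤ) + 2 * qvac K ℓ (fun j => n (j+1)) m' 0
        - qvac K ℓ (fun j => n (j+1)) m' 1 := by
  have h1 := qvac_step (K+1) ℓ n (Fin.cons m1 m')
  have h2 := qvac_step K ℓ (fun j => n (j+1)) m'
  rw [qvac_cons_succ] at h1
  rw [Fin.sum_univ_succ] at h1
  simp only [Fin.cons_zero, Fin.cons_succ, Fin.val_zero, Fin.val_succ] at h1
  rw [h1]
  have : ∑ j : Fin K, (2 * (m' j : ℤ) - (n ((j:ℕ) + 1 + 1) : ℤ))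
      = qvac K ℓ (fun j => n (j+1)) m' 0 - qvac K ℓ (fun j => n (j+1)) m' 1 := by
    rw [h2]; ring
  rw [this]; ring

lemma Zsummand_cons (x0 x1 : ℝ) (K ℓ : ℕ) (n : ℕ → ℕ) (m1 : ℕ) (m' : Fin K → ℕ) :
    Zsummand x0 x1 (K+1) ℓ n (Fin.cons m1 m')
      = x1 ^ (-(2*(m1:ℤ) - (n 1 : ℤ) + 2 * qvac K ℓ (fun j => n (j+1)) m' 0
            - qvac K ℓ (fun j => n (j+1)) m' 1))
        * x0 ^ (qvac K ℓ (fun j => n (j+1)) m' 0)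
        * (genBinom (qvac K ℓ (fun j => n (j+1)) m' 0) m1
            * ∏ j : Fin K, genBinom (qvac K ℓ (fun j => n (j+1)) m' ((j:ℕ)+1)) (m' j)) := by
  have e1 : qvac (K+1) ℓ n (Fin.cons m1 m') 1 = qvac K ℓ (fun j => n (j+1)) m' 0 :=
    qvac_cons_succ K ℓ n m1 m' 0
  unfold Zsummand
  rw [qvac_cons_zero, e1, Fin.prod_univ_succ]
  simp only [Fin.cons_zero, Fin.cons_succ, Fin.val_zero, Fin.val_succ, zero_add, e1,
    qvac_cons_succ]

/-! ### The key `zpow` identity -/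

lemma key_identity (a b c : ℝ) (ha : a ≠ 0) (hb : b ≠ 0) (hc : c ≠ 0) (A B N : ℤ) :
    b ^ (N - 2*A + B) * a ^ A * ((a*c/b^2) ^ (-(A+1))) = b ^ (N+2) / (a*c) * (c^(-A) * b^B) := by
  have hb2 : (b^(2:ℕ) : ℝ) ≠ 0 := pow_ne_zero _ hb
  have habc : a*c/b^(2:ℕ) ≠ 0 := div_ne_zero (mul_ne_zero ha hc) hb2
  have hsq : ∀ C : ℤ, ((b^(2:ℕ) : ℝ))^C = (b^C)^(2:ℕ) := fun C => by
    rw [← zpow_natCast b 2, ← zpow_mul, mul_comm, zpow_mul, zpow_natCast]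
  rw [show N - 2*A + B = N + B - A - A by ring]
  simp only [zpow_sub₀ hb, zpow_add₀ hb, zpow_add₀ ha, zpow_add₀ hc, zpow_neg,
    zpow_one, div_zpow, mul_zpow, hsq, zpow_two]
  field_simp

/-! ### Summing over the first variable -/

lemma slice_hasSum (x0 x1 x2 : ℝ) (h0 : x0 ≠ 0) (h1 : x1 ≠ 0) (h2 : x2 ≠ 0)
    (hQ : x1^2 - 1 = x0 * x2) (hx1 : 1 < |x1|) (K ℓ : ℕ) (n : ℕ → ℕ) (m' : Fin K → ℕ) :
    HasSum (fun m1 => Zsummand x0 x1 (K+1) ℓ n (Fin.cons m1 m'))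
      (x1 ^ (n 1 + 2) / (x0 * x2) * Zsummand x1 x2 K ℓ (fun j => n (j+1)) m') := by
  set A := qvac K ℓ (fun j => n (j+1)) m' 0 with hA
  set B := qvac K ℓ (fun j => n (j+1)) m' 1 with hB
  set P := ∏ j : Fin K, genBinom (qvac K ℓ (fun j => n (j+1)) m' ((j:ℕ)+1)) (m' j) with hP
  have hx1sq : (x1:ℝ)^2 ≠ 0 := pow_ne_zero _ h1
  have habs : |x1 ^ (-2 : ℤ)| < 1 := by
    rw [zpow_neg, abs_inv, show (x1:ℝ)^(2:ℤ) = x1^(2:ℕ) from zpow_two x1 ▸ (sq x1 ▸ rfl)]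
    rw [abs_pow]
    exact inv_lt_one_of_one_lt₀ (one_lt_pow₀ hx1 two_ne_zero)
  have hgen := hasSum_genBinom A habs
  have hmul := hgen.mul_left (x1 ^ ((n 1 : ℤ) - 2*A + B) * x0 ^ A * P)
  have h1t : (1:ℝ) - x1 ^ (-2 : ℤ) = x0*x2/x1^2 := by
    rw [zpow_neg, show (x1:ℝ)^(2:ℤ) = x1^(2:ℕ) from zpow_two x1 ▸ (sq x1 ▸ rfl)]
    rw [eq_div_iff hx1sq, sub_mul, one_mul, inv_mul_cancel₀ hx1sq, ← hQ]
  convert hmul using 1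
  · rfl
  · funext m1
    rw [Zsummand_cons, ← hA, ← hB, ← hP]
    rw [show -(2*(m1:ℤ) - (n 1 : ℤ) + 2*A - B) = ((n 1 : ℤ) - 2*A + B) + (-2)*(m1:ℤ) by ring]
    rw [zpow_add₀ h1, zpow_mul, zpow_natCast]
    ring
  · rw [h1t]
    have hk := key_identity x0 x1 x2 h0 h1 h2 A B (n 1)
    have hcast : x1 ^ ((n 1 : ℤ) + 2) = x1 ^ (n 1 + 2 : ℕ) := by
      rw [← zpow_natCast x1 (n 1 + 2)]
      push_cast
      ring_nf
    unfold Zsummand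
    rw [← hA, ← hB, ← hP]
    calc x1 ^ (n 1 + 2) / (x0 * x2) * (x2 ^ (-A) * x1 ^ B * P)
        = (x1 ^ ((n 1:ℤ) + 2) / (x0 * x2) * (x2 ^ (-A) * x1 ^ B)) * P := by rw [hcast]; ring
      _ = (x1 ^ ((n 1 : ℤ) - 2*A + B) * x0 ^ A * ((x0*x2/x1^2) ^ (-(A+1)))) * P := by rw [hk]
      _ = x1 ^ ((n 1 : ℤ) - 2*A + B) * x0 ^ A * P * (x0*x2/x1^2) ^ (-(A+1)) := by ring

/-! ### Summability forces `1 < |x₁|` -/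

lemma one_lt_abs_x1 (x0 x1 : ℝ) (h0 : x0 ≠ 0) (h1 : x1 ≠ 0) (K ℓ : ℕ) (n : ℕ → ℕ)
    (hsum : Summable (Zsummand x0 x1 (K+1) ℓ n)) : 1 < |x1| := by
  set M := (Finset.range (K+3)).sup n with hM
  set m' : Fin K → ℕ := fun _ => M with hm'
  set n' : ℕ → ℕ := fun j => n (j+1) with hn'
  have hq : ∀ i : ℕ, 0 ≤ qvac K ℓ n' m' i := by
    intro i
    refine add_nonneg (Int.natCast_nonneg _) (Finset.sum_nonneg fun j _ => ?_)
    by_cases h : i ≤ (j : ℕ)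
    · rw [if_pos h]
      refine mul_nonneg (by omega) ?_
      have hj : n' ((j:ℕ)+1) ≤ M := by
        refine Finset.le_sup (f := n) (Finset.mem_range.2 ?_)
        have := j.isLt; omega
      simp only [hm']
      omega
    · rw [if_neg h]
  set A := qvac K ℓ n' m' 0 with hA
  set B := qvac K ℓ n' m' 1 with hB
  set P := ∏ j : Fin K, genBinom (qvac K ℓ n' m' ((j:ℕ)+1)) (m' j) with hP
  have hP1 : 1 ≤ P := by
    have := Finset.prod_le_prod (s := Finset.univ)
      (f := fun _ : Fin K => (1:ℝ))
      (g := fun j => genBinom (qvac K ℓ n' m' ((j:ℕ)+1)) (m' j))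
      (fun j _ => zero_le_one) (fun j _ => one_le_genBinom_of_nonneg (hq _) _)
    simpa using this
  set y := |x1| with hy
  have hy0 : 0 < y := abs_pos.2 h1
  have habs_zpow : ∀ E : ℤ, |x1 ^ E| = y ^ E := fun E => by
    rw [← Real.norm_eq_abs, norm_zpow, Real.norm_eq_abs]
  set r := y ^ (-2 : ℤ) with hr
  have hr0 : 0 < r := zpow_pos hy0 _
  set D := y ^ ((n 1 : ℤ) - 2*A + B) * |x0 ^ A| with hD
  have hD0 : 0 < D := mul_pos (zpow_pos hy0 _) (abs_pos.2 (zpow_ne_zero _ h0))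
  have hg : Function.Injective (fun m1 : ℕ => Fin.cons m1 m' : ℕ → (Fin (K+1) → ℕ)) := by
    intro a b hab
    have := congrFun hab 0
    simpa using this
  have hsum2 : Summable fun m1 : ℕ => |Zsummand x0 x1 (K+1) ℓ n (Fin.cons m1 m')| :=
    (hsum.comp_injective hg).abs
  have hle : ∀ m1 : ℕ, D * r ^ m1 ≤ |Zsummand x0 x1 (K+1) ℓ n (Fin.cons m1 m')| := by
    intro m1
    rw [Zsummand_cons, ← hn', ← hA, ← hB, ← hP]
    rw [abs_mul, abs_mul, habs_zpow]
    have e1 : y ^ (-(2*(m1:ℤ) - (n 1 : ℤ) + 2*A - B))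
        = y ^ ((n 1 : ℤ) - 2*A + B) * r ^ m1 := by
      rw [show -(2*(m1:ℤ) - (n 1 : ℤ) + 2*A - B) = ((n 1 : ℤ) - 2*A + B) + (-2)*(m1:ℤ) by ring,
        zpow_add₀ (ne_of_gt hy0), zpow_mul, zpow_natCast]
    rw [e1]
    have hgP : 1 ≤ |genBinom A m1 * P| := by
      rw [abs_of_nonneg (by nlinarith [one_le_genBinom_of_nonneg (hq 0) m1])]
      nlinarith [one_le_genBinom_of_nonneg (hq 0) m1]
    calc D * r ^ m1 = y ^ ((n 1 : ℤ) - 2*A + B) * r ^ m1 * |x0 ^ A| * 1 := by rw [hD]; ring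
      _ ≤ y ^ ((n 1 : ℤ) - 2*A + B) * r ^ m1 * |x0 ^ A| * |genBinom A m1 * P| := by
          refine mul_le_mul_of_nonneg_left hgP ?_
          positivity
  have hDr : Summable fun m1 : ℕ => D * r ^ m1 :=
    Summable.of_nonneg_of_le (fun b => by positivity) hle hsum2
  have hgeom : Summable fun m1 : ℕ => r ^ m1 := by
    have := hDr.mul_left D⁻¹
    simpa [← mul_assoc, inv_mul_cancel₀ (ne_of_gt hD0)] using this
  have hrlt : r < 1 := by
    have := summable_geometric_iff_norm_lt_one.mp hgeom
    rwa [Real.norm_eq_abs, abs_of_pos hr0] at this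
  have : 1 < y ^ (2:ℤ) := by
    rw [hr, zpow_neg] at hrlt
    have hyp : 0 < y ^ (2:ℤ) := zpow_pos hy0 _
    nlinarith [hrlt, hyp, mul_inv_cancel₀ (ne_of_gt hyp)]
  have h2 : y ^ (2:ℤ) = y * y := by rw [zpow_two]
  rw [h2] at this
  nlinarith [this, hy0]

/-- The equivalence `(Fin K → ℕ) × ℕ ≃ (Fin (K+1) → ℕ)` splitting off the first variable. -/
def consEquiv (K : ℕ) : ((Fin K → ℕ) × ℕ) ≃ (Fin (K+1) → ℕ) where
  toFun p := Fin.cons p.2 p.1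
  invFun m := (fun j => m j.succ, m 0)
  left_inv p := by
    ext j
    · simp
    · simp
  right_inv m := Fin.cons_self_tail m

set_option maxHeartbeats 1000000 in
/-- One-step recursion for the sl₂ generating function: with `(x_i)` a sequence of nonzero
reals solving the A₁ Q-system `x_{i+1} x_{i-1} = x_i² - 1`,
`Z^{(k)}_{ℓ,(n₁,…,n_k)}(x₀,x₁) = (x₁^{n₁+2}/(x₀ x₂)) · Z^{(k-1)}_{ℓ,(n₂,…,n_k)}(x₁,x₂)`. -/
theorem Zfun_recursion (x : ℤ → ℝ) (hne : ∀ i, x i ≠ 0)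
    (hQ : ∀ i : ℤ, x (i + 1) * x (i - 1) = x i ^ 2 - 1)
    (k : ℕ) (hk : 1 ≤ k) (ℓ : ℕ) (n : ℕ → ℕ)
    (hsum : Summable (Zsummand (x 0) (x 1) k ℓ n))
    (hsum' : Summable (Zsummand (x 1) (x 2) (k - 1) ℓ (fun j => n (j + 1)))) :
    Zfun (x 0) (x 1) k ℓ n
      = x 1 ^ (n 1 + 2) / (x 0 * x 2) *
        Zfun (x 1) (x 2) (k - 1) ℓ (fun j => n (j + 1)) := by
  obtain ⟨K, rfl⟩ : ∃ K, k = K + 1 := ⟨k - 1, by omega⟩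
  simp only [Nat.add_sub_cancel] at hsum' ⊢
  have h2Q : (x 1)^2 - 1 = x 0 * x 2 := by
    have hq1 := hQ 1
    norm_num at hq1
    rw [← hq1]; ring
  have hx1 : 1 < |x 1| := one_lt_abs_x1 (x 0) (x 1) (hne 0) (hne 1) K ℓ n hsum
  have slice : ∀ m' : Fin K → ℕ,
      HasSum (fun m1 => Zsummand (x 0) (x 1) (K+1) ℓ n (Fin.cons m1 m'))
        (x 1 ^ (n 1 + 2) / (x 0 * x 2) * Zsummand (x 1) (x 2) K ℓ (fun j => n (j+1)) m') :=
    fun m' => slice_hasSum (x 0) (x 1) (x 2) (hne 0) (hne 1) (hne 2) h2Q hx1 K ℓ n m'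
  have hsumE : Summable ((Zsummand (x 0) (x 1) (K+1) ℓ n) ∘ (consEquiv K)) :=
    (Equiv.summable_iff (consEquiv K) (f := Zsummand (x 0) (x 1) (K+1) ℓ n)).2 hsum
  calc Zfun (x 0) (x 1) (K+1) ℓ n
      = ∑' p : (Fin K → ℕ) × ℕ, ((Zsummand (x 0) (x 1) (K+1) ℓ n) ∘ (consEquiv K)) p :=
        ((consEquiv K).tsum_eq (Zsummand (x 0) (x 1) (K+1) ℓ n)).symm
    _ = ∑' (m' : Fin K → ℕ) (m1 : ℕ),
          ((Zsummand (x 0) (x 1) (K+1) ℓ n) ∘ (consEquiv K)) (m', m1) :=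
        Summable.tsum_prod' (f := (Zsummand (x 0) (x 1) (K+1) ℓ n) ∘ (consEquiv K)) hsumE
          (fun m' => (slice m').summable)
    _ = ∑' m' : Fin K → ℕ,
          x 1 ^ (n 1 + 2) / (x 0 * x 2) * Zsummand (x 1) (x 2) K ℓ (fun j => n (j+1)) m' :=
        tsum_congr fun m' => (slice m').tsum_eq
    _ = x 1 ^ (n 1 + 2) / (x 0 * x 2) * Zfun (x 1) (x 2) K ℓ (fun j => n (j+1)) :=
        tsum_mul_left
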